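/- arXiv:2601.00750 — 2 statements merged into one kernel-verified Lean document; each statement's English description precedes it below -/
import Mathlib

section
/- Let $k_{\textnormal{F}} > 0$ and let $L_k = \{p \in \mathbb{Z}^2 : |p| \geq k_{\textnormal{F}}, |p-k| < k_{\textnormal{F}}\}$ be the lune associated to $k \in \mathbb{Z}^2 \setminus \{0\}$. Then there exists a constant $C > 0$ (independent of $k$ and $k_{\textnormal{F}}$) such that $|L_k| \leq C |k| (k_{\textnormal{F}} + 1)$. -/
set_option maxHeartbeats 2000000

noncomputable def znorm (p : ℤ × ℤ) : ℝ := Real.sqrt ((p.1 : ℝ)^2 + (p.2 : ℝ)^2)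

lemma lune_bound (kF : ℝ) (hkF : 0 < kF) (k1 k2 : ℤ) (hk : ¬(k1 = 0 ∧ k2 = 0)) :
    (Set.ncard {p : ℤ × ℤ | kF ≤ znorm p ∧ znorm (p - (k1, k2)) < kF} : ℝ)
      ≤ 6 * znorm (k1, k2) * (kF + 1) := by
  set S : Set (ℤ × ℤ) := {p | kF ≤ znorm p ∧ znorm (p - (k1, k2)) < kF} with hSdef
  set N : ℤ := k1 ^ 2 + k2 ^ 2 with hNdef
  have hN : 0 < N := by
    rcases not_and_or.mp hk with h | h
    · have h1 : 0 < k1 ^ 2 := by positivity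
      nlinarith [sq_nonneg k2]
    · have h1 : 0 < k2 ^ 2 := by positivity
      nlinarith [sq_nonneg k1]
  have hNR : (0:ℝ) < (N:ℝ) := by exact_mod_cast hN
  set g : ℤ := (Int.gcd k1 k2 : ℤ) with hgdef
  have hgnat : 0 < Int.gcd k1 k2 := Int.gcd_pos_iff.mpr (not_and_or.mp hk)
  have hgpos : 0 < g := by rw [hgdef]; exact_mod_cast hgnat
  set k1' : ℤ := k1 / g with hk1'def
  set k2' : ℤ := k2 / g with hk2'def
  have hk1 : g * k1' = k1 := Int.mul_ediv_cancel' (Int.gcd_dvd_left k1 k2)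
  have hk2 : g * k2' = k2 := Int.mul_ediv_cancel' (Int.gcd_dvd_right k1 k2)
  have hcop : IsCoprime k1' k2' := by
    rw [Int.isCoprime_iff_gcd_eq_one]
    exact Int.gcd_div_gcd_div_gcd hgnat
  obtain ⟨a, b, hab⟩ := hcop
  set N' : ℤ := k1' ^ 2 + k2' ^ 2 with hN'def
  have hNN : N = g ^ 2 * N' := by rw [hNdef, hN'def, ← hk1, ← hk2]; ring
  have hN' : 0 < N' := by nlinarith [hN, hNN, sq_nonneg g]
  set P : ℤ × ℤ → ℤ := fun p => p.1 * k1 + p.2 * k2 with hPdef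
  set f : ℤ × ℤ → ℤ := fun p => p.1 * k2' - p.2 * k1' with hfdef
  -- the key per-point estimates
  have key : ∀ p ∈ S, ((g:ℝ) * (f p : ℝ))^2 < kF^2 * (N:ℝ) ∧
      Real.sqrt (kF^2 * (N:ℝ) - ((g:ℝ) * (f p : ℝ))^2) ≤ (P p : ℝ) ∧
      (P p : ℝ) < Real.sqrt (kF^2 * (N:ℝ) - ((g:ℝ) * (f p : ℝ))^2) + (N:ℝ) := by
    intro p hp
    obtain ⟨hp1, hp2⟩ := hp
    have hnp : kF^2 ≤ ((p.1:ℝ)^2 + (p.2:ℝ)^2) := by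
      rw [znorm] at hp1
      exact (Real.le_sqrt hkF.le (by positivity)).mp hp1
    have hmq : ((p.1:ℝ) - (k1:ℝ))^2 + ((p.2:ℝ) - (k2:ℝ))^2 < kF^2 := by
      rw [znorm] at hp2
      have h2 : Real.sqrt (((p.1 - k1 : ℤ):ℝ)^2 + ((p.2 - k2 : ℤ):ℝ)^2) < kF := by
        simpa using hp2
      have := (Real.sqrt_lt' hkF).mp h2
      push_cast at this
      convert this using 2 <;> ring
    have idA : (P p)^2 + (g * f p)^2 = (p.1^2 + p.2^2) * N := by
      simp only [hPdef, hfdef, hNdef, ← hk1, ← hk2]; ring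
    have idB : (P p - N)^2 + (g * f p)^2 = ((p.1 - k1)^2 + (p.2 - k2)^2) * N := by
      simp only [hPdef, hfdef, hNdef, ← hk1, ← hk2]; ring
    have idAR : ((P p : ℤ):ℝ)^2 + ((g:ℝ) * (f p : ℝ))^2 = ((p.1:ℝ)^2 + (p.2:ℝ)^2) * (N:ℝ) := by
      exact_mod_cast congrArg (fun z : ℤ => (z:ℝ)) idA
    have idBR : ((P p : ℤ):ℝ) ^2 - 2 * (P p : ℝ) * N + (N:ℝ)^2 + ((g:ℝ) * (f p : ℝ))^2
        = (((p.1:ℝ) - k1)^2 + ((p.2:ℝ) - k2)^2) * (N:ℝ) := by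
      have := congrArg (fun z : ℤ => (z:ℝ)) idB
      push_cast at this
      nlinarith [this]
    set Pr : ℝ := (P p : ℝ) with hPr
    set Qr : ℝ := (g:ℝ) * (f p : ℝ) with hQr
    have hb : (Pr - N)^2 + Qr^2 < kF^2 * N := by nlinarith [hmq, hNR, idBR]
    have ha : kF^2 * N ≤ Pr^2 + Qr^2 := by nlinarith [hnp, hNR, idAR]
    have hw : Qr^2 < kF^2 * N := by nlinarith [sq_nonneg (Pr - N), hb]
    refine ⟨hw, ?_, ?_⟩
    · set c : ℝ := Real.sqrt (kF^2 * N - Qr^2) with hc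
      have hc2 : c^2 = kF^2 * N - Qr^2 := Real.sq_sqrt (by linarith)
      have hc0 : 0 ≤ c := Real.sqrt_nonneg _
      have hlt : (Pr - N)^2 < c^2 := by rw [hc2]; linarith
      nlinarith [ha, hc2, hlt, hc0, hNR, sq_nonneg (Pr + c), sq_nonneg (Pr - c)]
    · set c : ℝ := Real.sqrt (kF^2 * N - Qr^2) with hc
      have hc2 : c^2 = kF^2 * N - Qr^2 := Real.sq_sqrt (by linarith)
      have hc0 : 0 ≤ c := Real.sqrt_nonneg _
      have hlt : (Pr - N)^2 < c^2 := by rw [hc2]; linarith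
      nlinarith [hlt, hc0]
  -- finiteness
  have hfin : S.Finite := by
    apply Set.Finite.subset
      (Set.Finite.prod (Set.finite_Icc (k1 - ⌈kF⌉) (k1 + ⌈kF⌉))
        (Set.finite_Icc (k2 - ⌈kF⌉) (k2 + ⌈kF⌉)))
    rintro p ⟨hp1, hp2⟩
    rw [znorm] at hp2
    have h2 : Real.sqrt (((p.1 - k1 : ℤ):ℝ)^2 + ((p.2 - k2 : ℤ):ℝ)^2) < kF := by
      simpa using hp2
    have hlt := (Real.sqrt_lt' hkF).mp h2
    have h1 : |((p.1 - k1 : ℤ):ℝ)| < kF := by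
      nlinarith [sq_abs ((p.1 - k1 : ℤ):ℝ), abs_nonneg ((p.1 - k1 : ℤ):ℝ), sq_nonneg ((p.2 - k2 : ℤ):ℝ)]
    have h2' : |((p.2 - k2 : ℤ):ℝ)| < kF := by
      nlinarith [sq_abs ((p.2 - k2 : ℤ):ℝ), abs_nonneg ((p.2 - k2 : ℤ):ℝ), sq_nonneg ((p.1 - k1 : ℤ):ℝ)]
    have hi1 : |p.1 - k1| ≤ ⌈kF⌉ := by
      have : ((|p.1 - k1| : ℤ):ℝ) ≤ (⌈kF⌉ : ℝ) := by
        rw [Int.cast_abs]; exact le_trans h1.le (Int.le_ceil kF)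
      exact_mod_cast this
    have hi2 : |p.2 - k2| ≤ ⌈kF⌉ := by
      have : ((|p.2 - k2| : ℤ):ℝ) ≤ (⌈kF⌉ : ℝ) := by
        rw [Int.cast_abs]; exact le_trans h2'.le (Int.le_ceil kF)
      exact_mod_cast this
    rw [abs_le] at hi1 hi2
    exact ⟨Set.mem_Icc.mpr ⟨by omega, by omega⟩, Set.mem_Icc.mpr ⟨by omega, by omega⟩⟩
  set F : Finset (ℤ × ℤ) := hfin.toFinset with hFdef
  have hmemF : ∀ p, p ∈ F ↔ p ∈ S := fun p => hfin.mem_toFinset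
  set B : ℤ := ⌊kF * Real.sqrt (N:ℝ) / (g:ℝ)⌋ with hBdef
  have hgR : (0:ℝ) < (g:ℝ) := by exact_mod_cast hgpos
  have hB0 : 0 ≤ B := Int.le_floor.mpr (by push_cast; positivity)
  -- image bound
  have himg : F.image f ⊆ Finset.Icc (-B) B := by
    intro s hs
    obtain ⟨p, hpF, rfl⟩ := Finset.mem_image.mp hs
    obtain ⟨hw, -, -⟩ := key p ((hmemF p).mp hpF)
    have hsqrtN : kF * Real.sqrt (N:ℝ) = Real.sqrt (kF^2 * N) := by
      rw [Real.sqrt_mul (by positivity), Real.sqrt_sq hkF.le]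
    have habs : |(g:ℝ) * (f p : ℝ)| < kF * Real.sqrt (N:ℝ) := by
      rw [hsqrtN]
      exact (Real.lt_sqrt (abs_nonneg _)).mpr (by rw [sq_abs]; exact hw)
    have hfb : ((|f p| : ℤ):ℝ) ≤ kF * Real.sqrt (N:ℝ) / (g:ℝ) := by
      rw [le_div_iff₀ hgR]
      have heq : ((|f p| : ℤ):ℝ) * (g:ℝ) = |(g:ℝ) * (f p : ℝ)| := by
        rw [abs_mul, Int.cast_abs]
        rw [abs_of_pos hgR]; ring
      rw [heq]; exact habs.le
    have hBle : |f p| ≤ B := Int.le_floor.mpr hfb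
    exact Finset.mem_Icc.mpr (abs_le.mp hBle)
  -- fiber bound
  have hfiber : ∀ s ∈ F.image f, (F.filter (fun p => f p = s)).card ≤ (2*g+1).toNat := by
    intro s hs
    set Fs := F.filter (fun p => f p = s) with hFsdef
    rcases Finset.eq_empty_or_nonempty Fs with he | ⟨p₀, hp₀⟩
    · simp [he]
    · obtain ⟨hp₀F, hp₀f⟩ := Finset.mem_filter.mp hp₀
      have hstep : ∀ p ∈ Fs,
          p.1 - p₀.1 = k1' * (a * (p.1 - p₀.1) + b * (p.2 - p₀.2)) ∧
          p.2 - p₀.2 = k2' * (a * (p.1 - p₀.1) + b * (p.2 - p₀.2)) ∧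
          (a * (p.1 - p₀.1) + b * (p.2 - p₀.2)) ∈ Finset.Ioo (-g) g := by
        intro p hp
        obtain ⟨hpF, hpf⟩ := Finset.mem_filter.mp hp
        have hd : (p.1 - p₀.1) * k2' = (p.2 - p₀.2) * k1' := by
          have h1 : p.1 * k2' - p.2 * k1' = s := hpf
          have h2 : p₀.1 * k2' - p₀.2 * k1' = s := hp₀f
          linear_combination h1 - h2
        have hd1 : p.1 - p₀.1 = k1' * (a * (p.1 - p₀.1) + b * (p.2 - p₀.2)) := by
          linear_combination (-(p.1 - p₀.1)) * hab + b * hd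
        have hd2 : p.2 - p₀.2 = k2' * (a * (p.1 - p₀.1) + b * (p.2 - p₀.2)) := by
          linear_combination (-(p.2 - p₀.2)) * hab + (-a) * hd
        refine ⟨hd1, hd2, ?_⟩
        set t : ℤ := a * (p.1 - p₀.1) + b * (p.2 - p₀.2) with htdef
        have hPdiff : P p - P p₀ = t * (g * N') := by
          simp only [hPdef, hN'def, ← hk1, ← hk2]
          linear_combination (g * k1') * hd1 + (g * k2') * hd2
        -- real bounds
        obtain ⟨-, hl1, hr1⟩ := key p ((hmemF p).mp hpF)
        obtain ⟨-, hl2, hr2⟩ := key p₀ ((hmemF p₀).mp hp₀F)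
        rw [hpf] at hl1 hr1
        rw [hp₀f] at hl2 hr2
        have hreal : |((P p - P p₀ : ℤ):ℝ)| < (N:ℝ) := by
          push_cast
          rw [abs_lt]
          constructor <;> linarith
        have hint : |P p - P p₀| < N := by exact_mod_cast hreal
        rw [hPdiff] at hint
        have hgN' : 0 < g * N' := mul_pos hgpos hN'
        have habs : |t| * (g * N') < N := by
          rw [← abs_of_pos hgN', ← abs_mul]; exact hint
        have hNeq : N = g * (g * N') := by rw [hNN]; ring
        rw [hNeq] at habs
        have ht : |t| < g := lt_of_mul_lt_mul_right habs (by positivity)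
        rw [abs_lt] at ht
        exact Finset.mem_Ioo.mpr ht
      have hcard : Fs.card ≤ (Finset.Ioo (-g) g).card := by
        apply Finset.card_le_card_of_injOn
          (fun p => a * (p.1 - p₀.1) + b * (p.2 - p₀.2))
        · intro p hp; exact (hstep p hp).2.2
        · intro p hp q hq htau
          obtain ⟨hp1, hp2, -⟩ := hstep p hp
          obtain ⟨hq1, hq2, -⟩ := hstep q hq
          simp only at htau
          rw [htau] at hp1 hp2
          have e1 : p.1 = q.1 := by linarith [hp1, hq1]
          have e2 : p.2 = q.2 := by linarith [hp2, hq2]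
          exact Prod.ext e1 e2
      calc Fs.card ≤ (Finset.Ioo (-g) g).card := hcard
        _ = (g - (-g) - 1).toNat := Int.card_Ioo _ _
        _ ≤ (2*g+1).toNat := by omega
  have hF : F.card ≤ (2*g+1).toNat * (F.image f).card :=
    Finset.card_le_mul_card_image F _ hfiber
  have himgcard : (F.image f).card ≤ (2*B+1).toNat := by
    refine le_trans (Finset.card_le_card himg) ?_
    rw [Int.card_Icc]
    omega
  have hcount : F.card ≤ (2*g+1).toNat * (2*B+1).toNat :=
    le_trans hF (Nat.mul_le_mul_left _ himgcard)
  -- pass to reals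
  have hncard : S.ncard = F.card := Set.ncard_eq_toFinset_card S hfin
  rw [hncard]
  set sN : ℝ := Real.sqrt (N:ℝ) with hsN
  have hznorm : znorm (k1, k2) = sN := by
    rw [znorm, hsN]; congr 1; push_cast [hNdef]; ring
  rw [hznorm]
  have hG1 : (1:ℝ) ≤ (g:ℝ) := by exact_mod_cast hgpos
  have hGs : (g:ℝ) ≤ sN := by
    rw [hsN]
    apply (Real.le_sqrt (by positivity) (le_of_lt hNR)).mpr
    have : g^2 ≤ N := by nlinarith [hNN, hN', hgpos]
    exact_mod_cast this
  have hs1 : (1:ℝ) ≤ sN := le_trans hG1 hGs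
  have hBr : (B:ℝ) ≤ kF * sN / (g:ℝ) := Int.floor_le _
  have hBrG : (B:ℝ) * (g:ℝ) ≤ kF * sN := by
    rw [← le_div_iff₀ hgR]; exact hBr
  have hB0R : (0:ℝ) ≤ (B:ℝ) := by exact_mod_cast hB0
  have hcR : (F.card : ℝ) ≤ (2*(g:ℝ)+1) * (2*(B:ℝ)+1) := by
    have h1 : ((2*g+1).toNat : ℤ) = 2*g+1 := Int.toNat_of_nonneg (by omega)
    have h2 : ((2*B+1).toNat : ℤ) = 2*B+1 := Int.toNat_of_nonneg (by omega)
    have h3 : (F.card : ℤ) ≤ (2*g+1) * (2*B+1) := by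
      calc (F.card : ℤ) ≤ (((2*g+1).toNat * (2*B+1).toNat : ℕ) : ℤ) := by exact_mod_cast hcount
        _ = (2*g+1) * (2*B+1) := by push_cast [h1, h2]; ring
    exact_mod_cast h3
  refine le_trans hcR ?_
  nlinarith [hBrG, mul_nonneg hB0R (by linarith : (0:ℝ) ≤ (g:ℝ) - 1), hG1, hGs, hs1, hkF.le,
    mul_nonneg (mul_nonneg hB0R (by linarith : (0:ℝ) ≤ (g:ℝ) - 1)) (by norm_num : (0:ℝ) ≤ 4),
    mul_pos hkF (lt_of_lt_of_le one_pos hs1)]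

theorem stmt0 :
    ∃ C : ℝ, 0 < C ∧ ∀ (kF : ℝ), 0 < kF → ∀ k : ℤ × ℤ, k ≠ 0 →
      (Set.ncard {p : ℤ × ℤ | kF ≤ znorm p ∧ znorm (p - k) < kF} : ℝ)
        ≤ C * znorm k * (kF + 1) := by
  refine ⟨6, by norm_num, ?_⟩
  intro kF hkF k hkne
  obtain ⟨k1, k2⟩ := k
  have hk : ¬(k1 = 0 ∧ k2 = 0) := by
    intro ⟨h1, h2⟩
    exact hkne (by simp [h1, h2, Prod.ext_iff])
  exact lune_bound kF hkF k1 k2 hk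
end

section
/- Let $k_{\textnormal{F}} > 0$ with $N$ comparable to $k_{\textnormal{F}}^2$, and let $e(p) = ||p|^2 - k_{\textnormal{F}}^2|$ satisfy $e(p) \geq 1/2$ for all $p \in \mathbb{Z}^2$ (midpoint choice of $k_{\textnormal{F}}^2$). Assume the divisor-type bound $r_2(n) \leq C_\varepsilon n^\varepsilon$. Then for every $\varepsilon > 0$ there exists $C_\varepsilon > 0$ such that $\sum_{p \in \mathbb{Z}^2,\, |p| \leq 2 k_{\textnormal{F}}} \frac{1}{e(p)} \leq C_\varepsilon k_{\textnormal{F}}^{2\varepsilon} \log(2 + k_{\textnormal{F}})$. -/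
lemma harmonic_real (K : ℕ) : ∑ k ∈ Finset.Icc 1 K, ((k:ℝ))⁻¹ ≤ 1 + Real.log K := by
  have h1 : ((harmonic K : ℚ) : ℝ) = ∑ k ∈ Finset.Icc 1 K, ((k:ℝ))⁻¹ := by
    rw [harmonic_eq_sum_Icc]; push_cast; ring
  rw [← h1]; exact harmonic_le_one_add_log K

lemma sum_g_bound (M N : ℕ) (hMN : M ≤ N) :
    ∑ n ∈ Finset.Icc 1 N, (if n ≤ M then 2 / ((M + 1 - n : ℕ) : ℝ) else 2 / ((n - M : ℕ) : ℝ))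
      ≤ 4 * (1 + Real.log N) := by
  have hmono : ∀ K : ℕ, K ≤ N → ∑ k ∈ Finset.Icc 1 K, ((k:ℝ))⁻¹ ≤ 1 + Real.log N := by
    intro K hK
    refine le_trans (Finset.sum_le_sum_of_subset_of_nonneg
      (Finset.Icc_subset_Icc_right hK) ?_) (harmonic_real N)
    intro i _ _; positivity
  have hsplit : Finset.Icc 1 N = Finset.Icc 1 M ∪ Finset.Icc (M+1) N := by
    ext x; simp only [Finset.mem_Icc, Finset.mem_union]; omega
  have hdisj : Disjoint (Finset.Icc 1 M) (Finset.Icc (M+1) N) := by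
    rw [Finset.disjoint_left]; intro a ha hb
    simp only [Finset.mem_Icc] at ha hb; omega
  rw [hsplit, Finset.sum_union hdisj]
  have hA : ∑ n ∈ Finset.Icc 1 M,
      (if n ≤ M then 2 / ((M + 1 - n : ℕ) : ℝ) else 2 / ((n - M : ℕ) : ℝ))
      = ∑ k ∈ Finset.Icc 1 M, 2 / ((k:ℕ) : ℝ) := by
    refine Finset.sum_nbij' (fun n => M + 1 - n) (fun k => M + 1 - k) ?_ ?_ ?_ ?_ ?_
    · intro a ha; simp only [Finset.mem_Icc] at *; omega
    · intro a ha; simp only [Finset.mem_Icc] at *; omega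
    · intro a ha; simp only [Finset.mem_Icc] at ha; omega
    · intro a ha; simp only [Finset.mem_Icc] at ha; omega
    · intro a ha; simp only [Finset.mem_Icc] at ha
      rw [if_pos (by omega)]
  have hB : ∑ n ∈ Finset.Icc (M+1) N,
      (if n ≤ M then 2 / ((M + 1 - n : ℕ) : ℝ) else 2 / ((n - M : ℕ) : ℝ))
      = ∑ k ∈ Finset.Icc 1 (N - M), 2 / ((k:ℕ) : ℝ) := by
    refine Finset.sum_nbij' (fun n => n - M) (fun k => k + M) ?_ ?_ ?_ ?_ ?_
    · intro a ha; simp only [Finset.mem_Icc] at *; omega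
    · intro a ha; simp only [Finset.mem_Icc] at *; omega
    · intro a ha; simp only [Finset.mem_Icc] at ha; omega
    · intro a ha; simp only [Finset.mem_Icc] at ha; omega
    · intro a ha; simp only [Finset.mem_Icc] at ha
      rw [if_neg (by omega)]
  rw [hA, hB]
  have e1 : ∑ k ∈ Finset.Icc 1 M, 2 / ((k:ℕ) : ℝ)
      = 2 * ∑ k ∈ Finset.Icc 1 M, ((k:ℝ))⁻¹ := by
    rw [Finset.mul_sum]; refine Finset.sum_congr rfl fun k _ => by rw [div_eq_mul_inv]
  have e2 : ∑ k ∈ Finset.Icc 1 (N-M), 2 / ((k:ℕ) : ℝ)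
      = 2 * ∑ k ∈ Finset.Icc 1 (N-M), ((k:ℝ))⁻¹ := by
    rw [Finset.mul_sum]; refine Finset.sum_congr rfl fun k _ => by rw [div_eq_mul_inv]
  rw [e1, e2]
  have b1 := hmono M hMN
  have b2 := hmono (N - M) (by omega)
  linarith

lemma pointwise_bound (kF : ℝ) (hkF : 0 < kF) (n : ℕ) (hn : 1 ≤ n)
    (h12 : 1/2 ≤ |(n:ℝ) - kF^2|) :
    1 / |(n:ℝ) - kF^2| ≤ (if n ≤ ⌊kF^2⌋₊ then 2 / ((⌊kF^2⌋₊ + 1 - n : ℕ) : ℝ)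
      else 2 / ((n - ⌊kF^2⌋₊ : ℕ) : ℝ)) := by
  set M := ⌊kF^2⌋₊ with hM
  have hMle : (M:ℝ) ≤ kF^2 := Nat.floor_le (by positivity)
  have hMgt : kF^2 < M + 1 := Nat.lt_floor_add_one _
  split_ifs with h
  · -- n ≤ M, so (n:ℝ) ≤ kF^2
    have hnle : (n:ℝ) ≤ kF^2 := le_trans (by exact_mod_cast Nat.cast_le.mpr h) hMle
    have habs : |(n:ℝ) - kF^2| = kF^2 - (n:ℝ) := by
      rw [abs_of_nonpos (by linarith)]; ring
    rw [habs] at h12 ⊢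
    have hcast : ((M + 1 - n : ℕ) : ℝ) = (M:ℝ) + 1 - n := by
      have : n ≤ M + 1 := by omega
      push_cast [Nat.cast_sub this]; ring
    rw [hcast]
    have hpos1 : (0:ℝ) < kF^2 - n := by linarith
    have hpos2 : (0:ℝ) < (M:ℝ) + 1 - n := by
      have : (n:ℝ) ≤ M := by exact_mod_cast h
      linarith
    rw [div_le_div_iff₀ hpos1 hpos2]
    rcases eq_or_lt_of_le h with heq | hlt
    · subst heq; linarith
    · have : (n:ℝ) + 1 ≤ M := by exact_mod_cast hlt
      linarith
  · -- n > M
    push_neg at h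
    have hnge : (M:ℝ) + 1 ≤ (n:ℝ) := by exact_mod_cast h
    have hgt : kF^2 < (n:ℝ) := lt_of_lt_of_le hMgt hnge
    have habs : |(n:ℝ) - kF^2| = (n:ℝ) - kF^2 := abs_of_nonneg (by linarith)
    rw [habs] at h12 ⊢
    have hcast : ((n - M : ℕ) : ℝ) = (n:ℝ) - M := by
      push_cast [Nat.cast_sub (le_of_lt h)]; ring
    rw [hcast]
    have hpos1 : (0:ℝ) < (n:ℝ) - kF^2 := by linarith
    have hpos2 : (0:ℝ) < (n:ℝ) - M := by linarith
    rw [div_le_div_iff₀ hpos1 hpos2]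
    rcases eq_or_lt_of_le (Nat.succ_le_of_lt h : M + 1 ≤ n) with heq | hlt
    · have : (n:ℝ) = (M:ℝ) + 1 := by exact_mod_cast heq.symm
      rw [this]; linarith
    · have : (M:ℝ) + 2 ≤ n := by exact_mod_cast hlt
      linarith


set_option maxHeartbeats 1000000 in
theorem stmt8
    (hr2 : ∀ ε : ℝ, 0 < ε → ∃ C : ℝ, 0 < C ∧ ∀ n : ℕ, 1 ≤ n →
      (Set.ncard {p : ℤ × ℤ | p.1^2 + p.2^2 = (n : ℤ)} : ℝ) ≤ C * (n : ℝ) ^ ε) :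
    ∀ ε : ℝ, 0 < ε → ∃ C : ℝ, 0 < C ∧ ∀ kF : ℝ, 0 < kF →
      (∀ p : ℤ × ℤ, (1:ℝ)/2 ≤ |((p.1:ℝ)^2 + (p.2:ℝ)^2) - kF^2|) →
      (∑' p : {p : ℤ × ℤ // znorm p ≤ 2 * kF},
          1 / |((p.1.1:ℝ)^2 + (p.1.2:ℝ)^2) - kF^2|)
        ≤ C * kF ^ (2*ε) * Real.log (2 + kF) := by
  intro ε hε
  obtain ⟨C₀, hC₀, hC⟩ := hr2 ε hε
  refine ⟨4 * (2:ℝ)^ε + 24 * C₀ * (4:ℝ)^ε, by positivity, ?_⟩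
  intro kF hkF hhalf
  -- kF^2 ≥ 1/2
  have hk2 : (1:ℝ)/2 ≤ kF^2 := by
    have h0 := hhalf (0, 0)
    have : |((((0,0) : ℤ×ℤ).1:ℝ))^2 + ((((0,0):ℤ×ℤ).2:ℝ))^2 - kF^2| = kF^2 := by
      norm_num
    rw [this] at h0; exact h0
  -- boundedness
  have hbound : ∀ p : ℤ × ℤ, znorm p ≤ 2*kF → (p.1:ℝ)^2 + (p.2:ℝ)^2 ≤ 4 * kF^2 := by
    intro p hp
    have h0 : (0:ℝ) ≤ (p.1:ℝ)^2 + (p.2:ℝ)^2 := by positivity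
    have hs := Real.sq_sqrt h0
    have hn := Real.sqrt_nonneg ((p.1:ℝ)^2 + (p.2:ℝ)^2)
    unfold znorm at hp
    nlinarith
  -- finiteness
  have hSfin : {p : ℤ × ℤ | znorm p ≤ 2 * kF}.Finite := by
    apply Set.Finite.subset (Set.finite_Icc ((-⌈2*kF⌉, -⌈2*kF⌉) : ℤ × ℤ) (⌈2*kF⌉, ⌈2*kF⌉))
    intro p hp
    have h4 := hbound p hp
    have h1 : |(p.1:ℝ)| ≤ 2*kF := by
      rw [abs_le]; constructor <;> nlinarith [sq_nonneg ((p.2:ℝ))]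
    have h2 : |(p.2:ℝ)| ≤ 2*kF := by
      rw [abs_le]; constructor <;> nlinarith [sq_nonneg ((p.1:ℝ))]
    rw [abs_le] at h1 h2
    have hc : (2:ℝ)*kF ≤ (⌈2*kF⌉ : ℤ) := Int.le_ceil _
    constructor <;> constructor
    · exact_mod_cast (by push_cast; linarith : ((-⌈2*kF⌉ : ℤ) : ℝ) ≤ (p.1 : ℝ))
    · exact_mod_cast (by push_cast; linarith : ((-⌈2*kF⌉ : ℤ) : ℝ) ≤ (p.2 : ℝ))
    · exact_mod_cast (by linarith : (p.1 : ℝ) ≤ ((⌈2*kF⌉ : ℤ) : ℝ))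
    · exact_mod_cast (by linarith : (p.2 : ℝ) ≤ ((⌈2*kF⌉ : ℤ) : ℝ))
  haveI hFT : Fintype {p : ℤ × ℤ // znorm p ≤ 2 * kF} := hSfin.fintype
  rw [tsum_fintype,
    ← Finset.sum_subtype (p := fun q : ℤ × ℤ => znorm q ≤ 2 * kF) hSfin.toFinset (fun x => hSfin.mem_toFinset)
      (fun p : ℤ × ℤ => 1 / |((p.1:ℝ)^2 + (p.2:ℝ)^2) - kF^2|)]
  -- now a finite sum
  have hcast : ∀ p : ℤ × ℤ, (((p.1^2 + p.2^2).toNat : ℕ) : ℝ) = (p.1:ℝ)^2 + (p.2:ℝ)^2 := by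
    intro p
    have h0 : (0:ℤ) ≤ p.1^2 + p.2^2 := by positivity
    rw [← Int.cast_natCast, Int.toNat_of_nonneg h0]
    push_cast; ring
  have hstep1 : ∑ p ∈ hSfin.toFinset, 1 / |((p.1:ℝ)^2 + (p.2:ℝ)^2) - kF^2|
      = ∑ p ∈ hSfin.toFinset,
        (fun n : ℕ => 1 / |(n:ℝ) - kF^2|) ((fun q : ℤ × ℤ => (q.1^2 + q.2^2).toNat) p) :=
    Finset.sum_congr rfl fun p _ => by simp only; rw [hcast]
  rw [hstep1, Finset.sum_comp (fun n : ℕ => 1 / |(n:ℝ) - kF^2|)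
    (fun q : ℤ × ℤ => (q.1^2 + q.2^2).toNat)]
  set B : ℕ → ℝ := fun n => if n = 0 then 2 else
      (C₀ * 4^ε * kF^(2*ε)) * (if n ≤ ⌊kF^2⌋₊ then 2 / ((⌊kF^2⌋₊ + 1 - n : ℕ) : ℝ)
        else 2 / ((n - ⌊kF^2⌋₊ : ℕ) : ℝ)) with hB
  have hK0 : (0:ℝ) ≤ C₀ * 4^ε * kF^(2*ε) := by positivity
  have hB0 : ∀ n, 0 ≤ B n := by
    intro n; rw [hB]; dsimp only
    split_ifs <;> positivity
  have hterm : ∀ n ∈ hSfin.toFinset.image (fun q : ℤ × ℤ => (q.1^2 + q.2^2).toNat),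
      (hSfin.toFinset.filter fun a => (fun q : ℤ × ℤ => (q.1^2 + q.2^2).toNat) a = n).card
        • (fun n : ℕ => 1 / |(n:ℝ) - kF^2|) n ≤ B n := by
    intro n hnI
    obtain ⟨p, hpT, hgp⟩ := Finset.mem_image.mp hnI
    have hpS : znorm p ≤ 2 * kF := hSfin.mem_toFinset.mp hpT
    have hnR : ((n:ℕ):ℝ) = (p.1:ℝ)^2 + (p.2:ℝ)^2 := by rw [← hgp]; exact hcast p
    have h12 : 1/2 ≤ |(n:ℝ) - kF^2| := by rw [hnR]; exact hhalf p
    have habs : 0 < |(n:ℝ) - kF^2| := by linarith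
    have hFnn : (0:ℝ) ≤ 1 / |(n:ℝ) - kF^2| := by positivity
    have hFle2 : 1 / |(n:ℝ) - kF^2| ≤ 2 := by
      rw [div_le_iff₀ habs]; linarith
    simp only [nsmul_eq_mul]
    by_cases hn0 : n = 0
    · subst hn0
      have hfil : hSfin.toFinset.filter (fun a : ℤ × ℤ => (a.1^2 + a.2^2).toNat = 0)
          ⊆ {((0:ℤ),(0:ℤ))} := by
        intro a ha
        simp only [Finset.mem_filter] at ha
        have h0' : a.1^2 + a.2^2 ≤ 0 := by
          have h0'' : (0:ℤ) ≤ a.1^2 + a.2^2 := by positivity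
          omega
        have h1 : a.1 = 0 := by nlinarith [sq_nonneg a.1, sq_nonneg a.2]
        have h2 : a.2 = 0 := by nlinarith [sq_nonneg a.1, sq_nonneg a.2]
        simp [Prod.ext_iff, h1, h2]
      have hcard : (((hSfin.toFinset.filter
          (fun a : ℤ × ℤ => (a.1^2 + a.2^2).toNat = 0)).card : ℕ) : ℝ) ≤ 1 := by
        have h' := Finset.card_le_card hfil
        simp only [Finset.card_singleton] at h'
        exact_mod_cast h'
      rw [hB]; simp only [if_pos rfl]
      calc ((hSfin.toFinset.filter (fun a : ℤ × ℤ => (a.1^2 + a.2^2).toNat = 0)).card : ℝ)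
            * (1 / |((0:ℕ):ℝ) - kF^2|) ≤ 1 * 2 :=
          mul_le_mul hcard hFle2 hFnn one_pos.le
        _ = 2 := by ring
    · have hn1 : 1 ≤ n := Nat.one_le_iff_ne_zero.mpr hn0
      have hsphfin : {q : ℤ × ℤ | q.1^2 + q.2^2 = (n:ℤ)}.Finite := by
        apply Set.Finite.subset (Set.finite_Icc ((-(n:ℤ), -(n:ℤ)) : ℤ × ℤ) ((n:ℤ), (n:ℤ)))
        intro q hq
        simp only [Set.mem_setOf_eq] at hq
        have hn' : (1:ℤ) ≤ (n:ℤ) := by exact_mod_cast hn1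
        simp only [Set.mem_Icc, Prod.mk_le_mk]
        have h1 : q.1^2 ≤ (n:ℤ) := by nlinarith [sq_nonneg q.2]
        have h2 : q.2^2 ≤ (n:ℤ) := by nlinarith [sq_nonneg q.1]
        have habs1 : |q.1| ≤ (n:ℤ) := by
          by_contra hcon
          push_neg at hcon
          have hx : (n:ℤ) + 1 ≤ |q.1| := hcon
          have hy := pow_le_pow_left₀ (by linarith : (0:ℤ) ≤ (n:ℤ)+1) hx 2
          rw [sq_abs] at hy
          nlinarith
        have habs2 : |q.2| ≤ (n:ℤ) := by
          by_contra hcon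
          push_neg at hcon
          have hx : (n:ℤ) + 1 ≤ |q.2| := hcon
          have hy := pow_le_pow_left₀ (by linarith : (0:ℤ) ≤ (n:ℤ)+1) hx 2
          rw [sq_abs] at hy
          nlinarith
        obtain ⟨ha1, ha2⟩ := abs_le.mp habs1
        obtain ⟨hb1, hb2⟩ := abs_le.mp habs2
        exact ⟨⟨ha1, hb1⟩, ha2, hb2⟩
      have hsub : ((hSfin.toFinset.filter
          (fun a : ℤ × ℤ => (a.1^2 + a.2^2).toNat = n)) : Set (ℤ × ℤ))
          ⊆ {q : ℤ × ℤ | q.1^2 + q.2^2 = (n:ℤ)} := by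
        intro a ha
        simp only [Finset.coe_filter, Set.mem_setOf_eq] at ha ⊢
        have h0'' : (0:ℤ) ≤ a.1^2 + a.2^2 := by positivity
        omega
      have hcard : (((hSfin.toFinset.filter
          (fun a : ℤ × ℤ => (a.1^2 + a.2^2).toNat = n)).card : ℕ) : ℝ)
          ≤ C₀ * (n:ℝ)^ε := by
        refine le_trans ?_ (hC n hn1)
        have h1 := Set.ncard_le_ncard hsub hsphfin
        rw [Set.ncard_coe_finset] at h1
        exact_mod_cast h1
      have hn4 : (n:ℝ) ≤ 4 * kF^2 := by rw [hnR]; exact hbound p hpS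
      have h3 : ((kF:ℝ)^2)^ε = kF^(2*ε) := by
        rw [← Real.rpow_natCast kF 2, ← Real.rpow_mul hkF.le]; norm_num
      have hrpow : (n:ℝ)^ε ≤ 4^ε * kF^(2*ε) := by
        have h1 : (n:ℝ)^ε ≤ (4*kF^2)^ε := Real.rpow_le_rpow (by positivity) hn4 hε.le
        have h2 : ((4:ℝ)*kF^2)^ε = 4^ε * (kF^2)^ε := Real.mul_rpow (by norm_num) (by positivity)
        rw [h2, h3] at h1; exact h1
      have hcard2 : (((hSfin.toFinset.filter
          (fun a : ℤ × ℤ => (a.1^2 + a.2^2).toNat = n)).card : ℕ) : ℝ)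
          ≤ C₀ * 4^ε * kF^(2*ε) := by
        refine le_trans hcard ?_
        calc C₀ * (n:ℝ)^ε ≤ C₀ * (4^ε * kF^(2*ε)) :=
              mul_le_mul_of_nonneg_left hrpow hC₀.le
          _ = C₀ * 4^ε * kF^(2*ε) := by ring
      have hFb : 1 / |(n:ℝ) - kF^2| ≤ (if n ≤ ⌊kF^2⌋₊ then 2 / ((⌊kF^2⌋₊ + 1 - n : ℕ) : ℝ)
          else 2 / ((n - ⌊kF^2⌋₊ : ℕ) : ℝ)) := pointwise_bound kF hkF n hn1 h12
      rw [hB]; simp only [if_neg hn0]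
      exact mul_le_mul hcard2 hFb hFnn hK0
  refine le_trans (Finset.sum_le_sum hterm) ?_
  have hIsub : hSfin.toFinset.image (fun q : ℤ × ℤ => (q.1^2 + q.2^2).toNat)
      ⊆ insert 0 (Finset.Icc 1 ⌊4*kF^2⌋₊) := by
    intro n hnI
    obtain ⟨p, hpT, hgp⟩ := Finset.mem_image.mp hnI
    have hpS : znorm p ≤ 2 * kF := hSfin.mem_toFinset.mp hpT
    have hnR : ((n:ℕ):ℝ) = (p.1:ℝ)^2 + (p.2:ℝ)^2 := by rw [← hgp]; exact hcast p
    have hn4 : (n:ℝ) ≤ 4 * kF^2 := by rw [hnR]; exact hbound p hpS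
    have hnN : n ≤ ⌊4*kF^2⌋₊ := Nat.le_floor hn4
    simp only [Finset.mem_insert, Finset.mem_Icc]
    omega
  refine le_trans (Finset.sum_le_sum_of_subset_of_nonneg hIsub fun i _ _ => hB0 i) ?_
  rw [Finset.sum_insert (by simp)]
  -- the harmonic part
  have hMN' : ⌊kF^2⌋₊ ≤ ⌊4*kF^2⌋₊ := Nat.floor_mono (by nlinarith)
  have hNge : (1:ℕ) ≤ ⌊4*kF^2⌋₊ := Nat.le_floor (by push_cast; nlinarith)
  have hsumg := sum_g_bound ⌊kF^2⌋₊ ⌊4*kF^2⌋₊ hMN'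
  have hNle : ((⌊4*kF^2⌋₊ : ℕ) : ℝ) ≤ 4*kF^2 := Nat.floor_le (by positivity)
  have hNpos : (0:ℝ) < ((⌊4*kF^2⌋₊ : ℕ) : ℝ) := by exact_mod_cast hNge
  have hlog1 : Real.log ((⌊4*kF^2⌋₊ : ℕ) : ℝ) ≤ Real.log (4*kF^2) :=
    Real.log_le_log hNpos hNle
  have h44 : 4*kF^2 ≤ (2+kF)^4 := by nlinarith [sq_nonneg kF, sq_nonneg (2+kF), hkF.le]
  have hlog2 : Real.log (4*kF^2) ≤ 4 * Real.log (2+kF) := by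
    calc Real.log (4*kF^2) ≤ Real.log ((2+kF)^4) := Real.log_le_log (by positivity) h44
      _ = 4 * Real.log (2+kF) := by rw [Real.log_pow]; norm_num
  have hlog3 : (1:ℝ)/2 ≤ Real.log (2+kF) := by
    have h2' : Real.log 2 ≤ Real.log (2+kF) := Real.log_le_log (by norm_num) (by linarith)
    have := Real.log_two_gt_d9; linarith
  have hsum2 : ∑ n ∈ Finset.Icc 1 ⌊4*kF^2⌋₊, B n
      ≤ (C₀ * 4^ε * kF^(2*ε)) * (24 * Real.log (2+kF)) := by
    have he : ∑ n ∈ Finset.Icc 1 ⌊4*kF^2⌋₊, B n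
        = (C₀ * 4^ε * kF^(2*ε)) * ∑ n ∈ Finset.Icc 1 ⌊4*kF^2⌋₊,
          (if n ≤ ⌊kF^2⌋₊ then 2 / ((⌊kF^2⌋₊ + 1 - n : ℕ) : ℝ)
            else 2 / ((n - ⌊kF^2⌋₊ : ℕ) : ℝ)) := by
      rw [Finset.mul_sum]
      refine Finset.sum_congr rfl fun n hn => ?_
      have : n ≠ 0 := by
        simp only [Finset.mem_Icc] at hn; omega
      rw [hB]; simp only [if_neg this]
    rw [he]
    refine mul_le_mul_of_nonneg_left (le_trans hsumg ?_) hK0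
    linarith
  have hB0eq : B 0 = 2 := by rw [hB]; norm_num
  rw [hB0eq]
  have hp1 : (1:ℝ) ≤ 2^ε * kF^(2*ε) := by
    have h3 : ((kF:ℝ)^2)^ε = kF^(2*ε) := by
      rw [← Real.rpow_natCast kF 2, ← Real.rpow_mul hkF.le]; norm_num
    have ha : ((1:ℝ)/2)^ε ≤ (kF^2)^ε := Real.rpow_le_rpow (by norm_num) hk2 hε.le
    have hcg : (2:ℝ)^ε * ((1:ℝ)/2)^ε = 1 := by
      rw [← Real.mul_rpow (by norm_num) (by norm_num)]
      norm_num
    calc (1:ℝ) = 2^ε * ((1:ℝ)/2)^ε := hcg.symm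
      _ ≤ 2^ε * kF^(2*ε) := by
          rw [← h3]; exact mul_le_mul_of_nonneg_left ha (by positivity)
  have h2le : (2:ℝ) ≤ 4 * 2^ε * kF^(2*ε) * Real.log (2+kF) := by
    have hm := mul_le_mul hp1 hlog3 (by norm_num) (by positivity)
    nlinarith
  nlinarith [hsum2, h2le]
end
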